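/- Let p > 1 and q = p/(p-1). The pair (ρ, φ) defined on ℝⁿ × (0,∞) by ρ(x,t) = c_{n,p} t^{-n} exp(-(p-1)‖x‖^q/(pt)^q) and φ(x,t) = ‖x‖^q/(q t^{q-1}) satisfies the p-continuity equation ∂ρ/∂t + ∇·(ρ |∇φ|^{p-2} ∇φ) = 0 on ℝⁿ \ {0} for each t > 0, where c_{n,p} is any positive constant. -/

import Mathlib

open Real

/-- Euclidean divergence of a vector field on ℝⁿ. -/
noncomputable def diverg {n : ℕ}
    (v : EuclideanSpace ℝ (Fin n) → EuclideanSpace ℝ (Fin n))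
    (x : EuclideanSpace ℝ (Fin n)) : ℝ :=
  ∑ i, fderiv ℝ (fun y => v y i) x (EuclideanSpace.single i 1)

private lemma aux_grad {E : Type*} [NormedAddCommGroup E]
    [InnerProductSpace ℝ E] [CompleteSpace E] {f : E → ℝ} {a : ℝ} {v x : E}
    (h : HasFDerivAt f (a • innerSL ℝ v) x) : HasGradientAt f (a • v) x := by
  rw [hasGradientAt_iff_hasFDerivAt]
  refine h.congr_fderiv ?_
  ext w
  simp [InnerProductSpace.toDual_apply_apply, real_inner_smul_left]

private lemma aux_scalar (p q t N : ℝ) (hp : 1 < p) (hq : q = p / (p - 1)) (ht : 0 < t)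
    (hN : 0 < N) :
    (N ^ (q-1) * t ^ (-(q-1))) ^ (p-2) * (N ^ (q-2) * t ^ (-(q-1))) = t⁻¹ := by
  have hp1 : (0:ℝ) < p - 1 := by linarith
  have hpq : (p - 1) * q = p := by rw [hq]; field_simp
  have e1 : (q-1)*(p-2) + (q-2) = 0 := by linear_combination hpq
  have e2 : -(q-1)*(p-2) + -(q-1) = -1 := by linear_combination -hpq
  rw [Real.mul_rpow (by positivity) (by positivity),
    ← Real.rpow_mul hN.le, ← Real.rpow_mul ht.le]
  rw [show (N ^ ((q-1)*(p-2)) * t ^ (-(q-1)*(p-2))) * (N ^ (q-2) * t ^ (-(q-1)))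
      = (N ^ ((q-1)*(p-2)) * N ^ (q-2)) * (t ^ (-(q-1)*(p-2)) * t ^ (-(q-1))) by ring,
    ← Real.rpow_add hN, ← Real.rpow_add ht, e1, e2, Real.rpow_zero, Real.rpow_neg_one, one_mul]

/-- The special pair (ρ, φ) on ℝⁿ × (0,∞), with ρ(x,t) = c t^{-n} exp(-(p-1)‖x‖^q/(pt)^q)
and φ(x,t) = ‖x‖^q/(q t^{q-1}), satisfies the p-continuity equation
∂_t ρ + ∇·(ρ |∇φ|^{p-2} ∇φ) = 0 on ℝⁿ \ {0} for each t > 0. -/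
theorem stmt1 (n : ℕ) (p q : ℝ) (hp : 1 < p) (hq : q = p / (p - 1))
    (c : ℝ) (hc : 0 < c)
    (ρ φ : EuclideanSpace ℝ (Fin n) → ℝ → ℝ)
    (hρ : ∀ x t, ρ x t = c * t ^ (-(n : ℝ)) * exp (-(p - 1) * ‖x‖ ^ q / (p * t) ^ q))
    (hφ : ∀ x t, φ x t = ‖x‖ ^ q / (q * t ^ (q - 1))) :
    ∀ t : ℝ, 0 < t → ∀ x : EuclideanSpace ℝ (Fin n), x ≠ 0 →
      deriv (fun s => ρ x s) t
        + diverg (fun y => ρ y t •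
            (‖gradient (fun z => φ z t) y‖ ^ (p - 2) • gradient (fun z => φ z t) y)) x = 0 := by
  intro t ht x hx
  have hp1 : (0:ℝ) < p - 1 := by linarith
  have hp0 : (0:ℝ) < p := by linarith
  have hq1 : 1 < q := by rw [hq, lt_div_iff₀ hp1]; linarith
  have hq0 : (0:ℝ) < q := by linarith
  have hpt : (0:ℝ) < p * t := by positivity
  have hPq : (0:ℝ) < (p * t) ^ q := rpow_pos_of_pos hpt q
  have hxn : (0:ℝ) < ‖x‖ := norm_pos_iff.mpr hx
  set A : ℝ := -(p - 1) * ((p * t) ^ q)⁻¹ with hA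
  have hρ' : ∀ y : EuclideanSpace ℝ (Fin n),
      ρ y t = c * t ^ (-(n:ℝ)) * exp (A * ‖y‖ ^ q) := by
    intro y; rw [hρ]; congr 1; rw [hA, div_eq_mul_inv]; ring
  -- gradient of φ(·, t)
  have hgrad : ∀ y : EuclideanSpace ℝ (Fin n),
      HasGradientAt (fun z => φ z t) (((q * t ^ (q-1))⁻¹ * (q * ‖y‖ ^ (q - 2))) • y) y := by
    intro y
    have h1 : (fun z : EuclideanSpace ℝ (Fin n) => φ z t)
        = fun z => (q * t ^ (q-1))⁻¹ * ‖z‖ ^ q := by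
      funext z; rw [hφ, div_eq_inv_mul]
    rw [h1]
    have h2 := (hasFDerivAt_norm_rpow y hq1).const_mul ((q * t ^ (q-1))⁻¹)
    rw [smul_smul] at h2
    exact aux_grad h2
  -- the vector field coincides with (ρ y t / t) • y away from 0
  have hfield : ∀ y : EuclideanSpace ℝ (Fin n), y ≠ 0 →
      ρ y t • (‖gradient (fun z => φ z t) y‖ ^ (p - 2) • gradient (fun z => φ z t) y)
        = (ρ y t * t⁻¹) • y := by
    intro y hy
    have hyn : (0:ℝ) < ‖y‖ := norm_pos_iff.mpr hy
    have htq : (0:ℝ) < t ^ (q-1) := rpow_pos_of_pos ht _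
    rw [(hgrad y).gradient]
    have hσ : (q * t ^ (q-1))⁻¹ * (q * ‖y‖ ^ (q - 2)) = ‖y‖ ^ (q-2) * t ^ (-(q-1)) := by
      rw [Real.rpow_neg ht.le, mul_inv]
      field_simp
    rw [hσ]
    have hσpos : (0:ℝ) < ‖y‖ ^ (q-2) * t ^ (-(q-1)) := by positivity
    have hnorm : ‖(‖y‖ ^ (q-2) * t ^ (-(q-1))) • y‖ = ‖y‖ ^ (q-1) * t ^ (-(q-1)) := by
      rw [norm_smul, Real.norm_eq_abs, abs_of_pos hσpos,
        show q - 1 = (q-2) + 1 by ring, Real.rpow_add_one hyn.ne']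
      ring
    rw [hnorm, smul_smul, smul_smul]
    congr 1
    rw [mul_assoc, aux_scalar p q t ‖y‖ hp hq ht hyn]
  -- closed form for the divergence
  have hB : ‖x‖ ^ (q-2) * ‖x‖ ^ 2 = ‖x‖ ^ q := by
    rw [show (‖x‖:ℝ)^2 = ‖x‖ ^ ((2:ℕ):ℝ) from (Real.rpow_natCast _ 2).symm,
      ← Real.rpow_add hxn]
    norm_num
  have hr : HasFDerivAt (fun y : EuclideanSpace ℝ (Fin n) => ρ y t * t⁻¹)
      (((ρ x t * t⁻¹) * (A * (q * ‖x‖ ^ (q-2)))) • innerSL ℝ x) x := by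
    have h1 := (hasFDerivAt_norm_rpow x hq1).const_mul A
    have h2 := h1.exp.const_mul (c * t ^ (-(n:ℝ)) * t⁻¹)
    have h3 : (fun y : EuclideanSpace ℝ (Fin n) => ρ y t * t⁻¹)
        = fun y => (c * t ^ (-(n:ℝ)) * t⁻¹) * exp (A * ‖y‖ ^ q) := by
      funext y; rw [hρ' y]; ring
    rw [h3]
    refine h2.congr_fderiv ?_
    rw [smul_smul, smul_smul, smul_smul, hρ' x]
    congr 1
    ring
  have hdiv : diverg (fun y => ρ y t •
        (‖gradient (fun z => φ z t) y‖ ^ (p - 2) • gradient (fun z => φ z t) y)) x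
      = n * (ρ x t * t⁻¹) + (ρ x t * t⁻¹) * A * q * ‖x‖ ^ q := by
    unfold diverg
    have hev : ∀ i : Fin n, fderiv ℝ (fun y => (ρ y t •
        (‖gradient (fun z => φ z t) y‖ ^ (p - 2) • gradient (fun z => φ z t) y)) i) x
        = ((ρ x t * t⁻¹) • (EuclideanSpace.proj (𝕜 := ℝ) i)
            + x i • (((ρ x t * t⁻¹) * (A * (q * ‖x‖ ^ (q-2)))) • innerSL ℝ x)) := by
      intro i
      have heq : (fun y => (ρ y t •
          (‖gradient (fun z => φ z t) y‖ ^ (p - 2) • gradient (fun z => φ z t) y)) i)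
          =ᶠ[nhds x] fun y => (ρ y t * t⁻¹) * y i := by
        filter_upwards [IsOpen.mem_nhds isOpen_compl_singleton hx] with y hy
        rw [hfield y hy]
        simp [smul_eq_mul]
      rw [heq.fderiv_eq]
      exact (hr.mul (EuclideanSpace.proj (𝕜 := ℝ) i).hasFDerivAt).fderiv
    rw [Finset.sum_congr rfl fun i _ => by rw [hev i]]
    have hsingle : ∀ i : Fin n, (EuclideanSpace.single i (1:ℝ)) i = 1 := by
      intro i; simp
    have hinner : ∀ i : Fin n, (innerSL ℝ x) (EuclideanSpace.single i (1:ℝ)) = x i := by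
      intro i; simp [EuclideanSpace.inner_single_right]
    simp only [ContinuousLinearMap.add_apply, ContinuousLinearMap.smul_apply]
    have : ∀ i : Fin n,
        (ρ x t * t⁻¹) • (EuclideanSpace.proj (𝕜 := ℝ) i) (EuclideanSpace.single i (1:ℝ))
          + x i • ((ρ x t * t⁻¹) * (A * (q * ‖x‖ ^ (q-2))))
              • (innerSL ℝ x) (EuclideanSpace.single i (1:ℝ))
        = (ρ x t * t⁻¹) + ((ρ x t * t⁻¹) * (A * (q * ‖x‖ ^ (q-2)))) * (x i * x i) := by
      intro i
      rw [hinner i]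
      show (ρ x t * t⁻¹) * (EuclideanSpace.single i (1:ℝ)) i + _ = _
      rw [hsingle i, mul_one, smul_eq_mul, smul_eq_mul]
      ring
    rw [Finset.sum_congr rfl fun i _ => this i, Finset.sum_add_distrib,
      Finset.sum_const, ← Finset.mul_sum]
    have hsum : ∑ i, x i * x i = ‖x‖ ^ 2 := by
      rw [EuclideanSpace.norm_eq, Real.sq_sqrt (Finset.sum_nonneg fun i _ => by positivity)]
      simp [Real.norm_eq_abs, sq_abs, sq]
    rw [hsum, Finset.card_univ, Fintype.card_fin, nsmul_eq_mul]
    rw [show (ρ x t * t⁻¹) * (A * (q * ‖x‖ ^ (q-2))) * ‖x‖^2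
        = (ρ x t * t⁻¹) * A * q * (‖x‖ ^ (q-2) * ‖x‖^2) by ring, hB]
  -- closed form for the time derivative
  have hfun : (fun s => ρ x s)
      = fun s => c * s ^ (-(n:ℝ)) * exp (-(p - 1) * ‖x‖ ^ q * ((p * s) ^ q)⁻¹) := by
    funext s; rw [hρ, div_eq_mul_inv]
  have hP : HasDerivAt (fun s : ℝ => p * s) p t := by
    simpa using (hasDerivAt_id t).const_mul p
  have hPq' : HasDerivAt (fun s : ℝ => (p * s) ^ q) (p * (q * (p*t) ^ (q-1))) t := by
    have := (Real.hasDerivAt_rpow_const (x := p * t) (p := q) (Or.inl hpt.ne')).comp t hP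
    simpa [mul_comm, Function.comp_def] using this
  have hinv : HasDerivAt (fun s : ℝ => ((p * s) ^ q)⁻¹)
      (-(p * (q * (p*t) ^ (q-1))) / ((p*t) ^ q) ^ 2) t := hPq'.inv hPq.ne'
  have hu : HasDerivAt (fun s : ℝ => -(p - 1) * ‖x‖ ^ q * ((p * s) ^ q)⁻¹)
      ((-(p - 1) * ‖x‖ ^ q) * (-(p * (q * (p*t) ^ (q-1))) / ((p*t) ^ q) ^ 2)) t :=
    hinv.const_mul _
  have hcs : HasDerivAt (fun s : ℝ => c * s ^ (-(n:ℝ)))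
      (c * (-(n:ℝ) * t ^ (-(n:ℝ) - 1))) t :=
    (Real.hasDerivAt_rpow_const (x := t) (p := -(n:ℝ)) (Or.inl ht.ne')).const_mul c
  have htot := hcs.mul hu.exp
  rw [hfun, show (fun s => c * s ^ (-(n:ℝ)) * exp (-(p - 1) * ‖x‖ ^ q * ((p * s) ^ q)⁻¹))
      = ((fun s => c * s ^ (-(n:ℝ))) * fun s => exp (-(p - 1) * ‖x‖ ^ q * ((p * s) ^ q)⁻¹))
      from rfl, htot.deriv, hdiv]
  -- final algebraic identity
  rw [hρ' x, hA]
  have h1 : t ^ (-(n:ℝ) - 1) = t ^ (-(n:ℝ)) * t⁻¹ := by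
    rw [Real.rpow_sub ht, Real.rpow_one, div_eq_mul_inv]
  have h2 : (p * t) ^ (q - 1) = (p * t) ^ q * (p * t)⁻¹ := by
    rw [Real.rpow_sub hpt, Real.rpow_one, div_eq_mul_inv]
  have h3 : -(p - 1) * ((p * t) ^ q)⁻¹ * ‖x‖ ^ q = -(p - 1) * ‖x‖ ^ q * ((p * t) ^ q)⁻¹ := by
    ring
  rw [h1, h2, h3]
  have hE : (0:ℝ) < exp (-(p - 1) * ‖x‖ ^ q * ((p * t) ^ q)⁻¹) := exp_pos _
  have htn : (0:ℝ) < t ^ (-(n:ℝ)) := rpow_pos_of_pos ht _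
  field_simp
  ring
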